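/- Let D ∈ 𝒟′_n and let D⁻ be D with the edge (v_n,v_t) deleted, where 3 ≤ t ≤ n−1 is the largest index such that (v_n,v_t) ∈ E(D). Let φ and ψ be the Perron vectors of D and D⁻, and set f_i = φ(v_i)/φ(v_n), g_i = ψ(v_i)/ψ(v_n). Then: (a) f_i = g_i for every t ≤ i ≤ n; (b) (g_{t−1}−f_{t−1})/(t−1) = 1/d⁺_D(v_n); (c) 0 < (1/d⁺_D(v_n))·(1 − 1/((t−1)(d⁺_D(v_n)−1))) ≤ (g_{t−2}−f_{t−2})/((t−1)(t−2)) ≤ 1/d⁺_D(v_n). -/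

import Mathlib

namespace PR

/-- Out-degree of `u` in the digraph on vertex set `{1,…,n} ⊆ ℕ` with adjacency `E`. -/
def outDeg (n : ℕ) (E : ℕ → ℕ → Bool) (u : ℕ) : ℕ :=
  ((Finset.Icc 1 n).filter (fun v => E u v)).card

/-- In-degree of `u`. -/
def inDeg (n : ℕ) (E : ℕ → ℕ → Bool) (u : ℕ) : ℕ :=
  ((Finset.Icc 1 n).filter (fun v => E v u)).card

/-- `E` is a simple digraph on the vertex set `{1,…,n}`: all edges join distinct
vertices of `{1,…,n}` (no loops; the `Bool`-valued adjacency precludes multi-edges). -/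
def IsDigraph (n : ℕ) (E : ℕ → ℕ → Bool) : Prop :=
  ∀ u v, E u v = true → u ∈ Finset.Icc 1 n ∧ v ∈ Finset.Icc 1 n ∧ u ≠ v

/-- `WalkLen E k u v` : there is a directed walk of length `k` from `u` to `v`. -/
def WalkLen (E : ℕ → ℕ → Bool) : ℕ → ℕ → ℕ → Prop
  | 0, u, v => u = v
  | (k+1), u, v => ∃ w, E u w = true ∧ WalkLen E k w v

/-- Every vertex reaches every other vertex by a directed walk. -/
def StronglyConnected (n : ℕ) (E : ℕ → ℕ → Bool) : Prop :=
  ∀ u ∈ Finset.Icc 1 n, ∀ v ∈ Finset.Icc 1 n, ∃ k, WalkLen E k u v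

/-- Directed distance: number of edges in a shortest directed path from `u` to `v`. -/
noncomputable def dist (E : ℕ → ℕ → Bool) (u v : ℕ) : ℕ :=
  sInf {k | WalkLen E k u v}

/-- Distance between two sets of vertices. -/
noncomputable def setDist (E : ℕ → ℕ → Bool) (A B : Set ℕ) : ℕ :=
  sInf {k | ∃ a ∈ A, ∃ b ∈ B, dist E a b = k}

/-- `φ` is the Perron vector of the simple random walk on the digraph: a positive
probability distribution on `{1,…,n}` which is stationary, i.e. `φ P = φ` where
`P(u,v) = 1/d⁺(u)` for edges `(u,v)` and `0` otherwise. -/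
def IsPerron (n : ℕ) (E : ℕ → ℕ → Bool) (φ : ℕ → ℝ) : Prop :=
  (∀ v ∈ Finset.Icc 1 n, 0 < φ v) ∧
  (∑ v ∈ Finset.Icc 1 n, φ v = 1) ∧
  (∀ v ∈ Finset.Icc 1 n, φ v =
    ∑ u ∈ Finset.Icc 1 n, if E u v then φ u / (outDeg n E u : ℝ) else 0)

/-- The principal ratio `γ = (max_u φ(u)) / (min_u φ(u))` of a vector `φ` on `{1,…,n}`. -/
noncomputable def pratio (n : ℕ) (φ : ℕ → ℝ) : ℝ :=
  if h : (Finset.Icc 1 n).Nonempty then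
    ((Finset.Icc 1 n).sup' h φ) / ((Finset.Icc 1 n).inf' h φ)
  else 0

/-- Vertices attaining the maximum of `φ`. -/
def Vmax (n : ℕ) (φ : ℕ → ℝ) : Set ℕ :=
  {v | v ∈ Finset.Icc 1 n ∧ ∀ u ∈ Finset.Icc 1 n, φ u ≤ φ v}

/-- Vertices attaining the minimum of `φ`. -/
def Vmin (n : ℕ) (φ : ℕ → ℝ) : Set ℕ :=
  {v | v ∈ Finset.Icc 1 n ∧ ∀ u ∈ Finset.Icc 1 n, φ v ≤ φ u}

/-- Membership in the family `𝒟′_n` (together with the Perron vector `φ` of `D`). -/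
def memDn' (n : ℕ) (E : ℕ → ℕ → Bool) (φ : ℕ → ℝ) : Prop :=
  IsDigraph n E ∧ StronglyConnected n E ∧ IsPerron n E φ ∧
  -- (i) v_1, v_2, …, v_n is a shortest directed path from v_1 to v_n, of length n-1
  (∀ i, 1 ≤ i → i < n → E i (i+1) = true) ∧ dist E 1 n = n - 1 ∧
  -- (ii) d⁺(v_i) = i for every 2 ≤ i ≤ n-1
  (∀ i, 2 ≤ i → i ≤ n - 1 → outDeg n E i = i) ∧
  -- (iii) v_2 ∈ V_max, v_n ∈ V_min, dist(V_max,V_min) = dist(v_2,v_n) = n-2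
  (2:ℕ) ∈ Vmax n φ ∧ n ∈ Vmin n φ ∧
  setDist E (Vmax n φ) (Vmin n φ) = n - 2 ∧ dist E 2 n = n - 2 ∧
  -- (iv) d⁺(v_n) ≥ 2
  2 ≤ outDeg n E n ∧
  -- (v) N⁺(v_n) ≠ {v_1, v_2}
  ¬ (∀ v, E n v = true ↔ (v = 1 ∨ v = 2))

section Helpers
variable {n : ℕ} {E : ℕ → ℕ → Bool}

lemma walk_append {k l u v w : ℕ}
    (h1 : WalkLen E k u v) (h2 : WalkLen E l v w) : WalkLen E (k+l) u w := by
  induction k generalizing u with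
  | zero => cases h1; simpa using h2
  | succ k ih =>
    obtain ⟨x, hx, hw⟩ := h1
    have : k + 1 + l = (k + l) + 1 := by omega
    rw [this]
    exact ⟨x, hx, ih hw⟩

lemma walk_chain (hpath : ∀ i, 1 ≤ i → i < n → E i (i+1) = true) :
    ∀ k a, 1 ≤ a → a + k ≤ n → WalkLen E k a (a+k) := by
  intro k
  induction k with
  | zero => intro a _ _; exact rfl
  | succ k ih =>
    intro a ha hak
    refine ⟨a+1, hpath a ha (by omega), ?_⟩
    have h2 := ih (a+1) (by omega) (by omega)
    have : a + 1 + k = a + (k+1) := by omega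
    rwa [this] at h2

lemma walk_chain' (hpath : ∀ i, 1 ≤ i → i < n → E i (i+1) = true)
    {a b : ℕ} (ha : 1 ≤ a) (hab : a ≤ b) (hb : b ≤ n) : WalkLen E (b - a) a b := by
  have := walk_chain hpath (b - a) a ha (by omega)
  rwa [Nat.add_sub_cancel' hab] at this

end Helpers

section Struct
variable {n : ℕ} {E : ℕ → ℕ → Bool}

lemma no_shortcut (hDig : IsDigraph n E)
    (hpath : ∀ i, 1 ≤ i → i < n → E i (i+1) = true)
    (hdist : dist E 1 n = n - 1)
    {i j : ℕ} (hij : E i j = true) (hi : i ≤ n - 1) : j ≤ i + 1 := by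
  obtain ⟨hiI, hjI, hne⟩ := hDig i j hij
  simp only [Finset.mem_Icc] at hiI hjI
  by_contra hcon
  push_neg at hcon
  have w1 : WalkLen E (i - 1) 1 i := walk_chain' hpath le_rfl hiI.1 hiI.2
  have w2 : WalkLen E 1 i j := ⟨j, hij, rfl⟩
  have w3 : WalkLen E (n - j) j n := walk_chain' hpath hjI.1 hjI.2 le_rfl
  have w : WalkLen E ((i - 1) + 1 + (n - j)) 1 n := walk_append (walk_append w1 w2) w3
  have hle : dist E 1 n ≤ (i - 1) + 1 + (n - j) := Nat.sInf_le w
  rw [hdist] at hle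
  omega

lemma nbrs (hDig : IsDigraph n E)
    (hpath : ∀ i, 1 ≤ i → i < n → E i (i+1) = true)
    (hdist : dist E 1 n = n - 1)
    {i : ℕ} (hdeg : outDeg n E i = i) (hi2 : 2 ≤ i) (hi : i ≤ n - 1) :
    ∀ j, E i j = true ↔ (1 ≤ j ∧ j ≤ i + 1 ∧ j ≠ i) := by
  have hn : 3 ≤ n := by omega
  have hsub : (Finset.Icc 1 n).filter (fun v => E i v) ⊆ (Finset.Icc 1 (i+1)).erase i := by
    intro j hj
    rw [Finset.mem_filter] at hj
    obtain ⟨hjI, hij⟩ := hj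
    obtain ⟨_, hjI', hne⟩ := hDig i j hij
    simp only [Finset.mem_Icc] at hjI'
    have := no_shortcut hDig hpath hdist hij hi
    simp only [Finset.mem_erase, Finset.mem_Icc]
    exact ⟨hne.symm, hjI'.1, this⟩
  have hcard : ((Finset.Icc 1 (i+1)).erase i).card = i := by
    rw [Finset.card_erase_of_mem (by simp [Finset.mem_Icc]; omega)]
    rw [Nat.card_Icc]
    omega
  have heq := Finset.eq_of_subset_of_card_le hsub (by
    rw [hcard]
    have : ((Finset.Icc 1 n).filter (fun v => E i v)).card = i := hdeg
    omega)
  intro j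
  constructor
  · intro hij
    have hj : j ∈ (Finset.Icc 1 (i+1)).erase i := by
      rw [← heq, Finset.mem_filter]
      obtain ⟨_, hjI, _⟩ := hDig i j hij
      exact ⟨hjI, hij⟩
    simp only [Finset.mem_erase, Finset.mem_Icc] at hj
    exact ⟨hj.2.1, hj.2.2, hj.1⟩
  · intro ⟨h1, h2, h3⟩
    have hj : j ∈ (Finset.Icc 1 (i+1)).erase i := by
      simp only [Finset.mem_erase, Finset.mem_Icc]
      exact ⟨h3, h1, h2⟩
    rw [← heq, Finset.mem_filter] at hj
    exact hj.2

lemma edge_one (hDig : IsDigraph n E)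
    (hpath : ∀ i, 1 ≤ i → i < n → E i (i+1) = true)
    (hdist : dist E 1 n = n - 1) (hn : 3 ≤ n) :
    ∀ j, E 1 j = true ↔ j = 2 := by
  intro j
  constructor
  · intro h
    obtain ⟨_, hjI, hne⟩ := hDig 1 j h
    simp only [Finset.mem_Icc] at hjI
    have := no_shortcut hDig hpath hdist h (by omega)
    omega
  · rintro rfl
    exact hpath 1 le_rfl (by omega)

lemma outDeg_one (hDig : IsDigraph n E)
    (hpath : ∀ i, 1 ≤ i → i < n → E i (i+1) = true)
    (hdist : dist E 1 n = n - 1) (hn : 3 ≤ n) :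
    outDeg n E 1 = 1 := by
  unfold outDeg
  have : (Finset.Icc 1 n).filter (fun v => E 1 v) = {2} := by
    ext j
    simp only [Finset.mem_filter, Finset.mem_Icc, Finset.mem_singleton,
      edge_one hDig hpath hdist hn j]
    omega
  rw [this]
  rfl

end Struct

section Eqn
variable {n : ℕ} {E : ℕ → ℕ → Bool}

lemma outDeg_congr {E' : ℕ → ℕ → Bool} {u : ℕ} (h : ∀ v, E' u v = E u v) :
    outDeg n E' u = outDeg n E u := by
  unfold outDeg
  congr 1
  apply Finset.filter_congr
  intro v _
  rw [h v]

lemma eqn_mid (hDig : IsDigraph n E)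
    (hpath : ∀ i, 1 ≤ i → i < n → E i (i+1) = true)
    (hdist : dist E 1 n = n - 1)
    (hdeg : ∀ i, 2 ≤ i → i ≤ n - 1 → outDeg n E i = i)
    (hn : 4 ≤ n)
    (E' : ℕ → ℕ → Bool) (hE' : ∀ u v, u ≠ n → E' u v = E u v)
    (φ : ℕ → ℝ) (hP : IsPerron n E' φ)
    (m : ℕ) (hm1 : 1 ≤ m) (hm : m + 1 ≤ n - 1) :
    φ (m+1) = φ m / (m:ℝ) + (∑ u ∈ Finset.Icc (m+2) (n-1), φ u / u)
      + (if E' n (m+1) then φ n / (outDeg n E' n : ℝ) else 0) := by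
  have hst := hP.2.2 (m+1) (by simp [Finset.mem_Icc]; omega)
  rw [hst]
  have hterm : ∀ u ∈ Finset.Icc 1 n,
      (if E' u (m+1) then φ u / (outDeg n E' u : ℝ) else 0) =
      (if u = m then φ m / (m:ℝ) else 0) +
      ((if u ∈ Finset.Icc (m+2) (n-1) then φ u / (u:ℝ) else 0) +
      (if u = n then (if E' n (m+1) then φ n / (outDeg n E' n : ℝ) else 0) else 0)) := by
    intro u huI
    simp only [Finset.mem_Icc] at huI
    by_cases hun : u = n
    · rw [hun]
      have h1 : ¬ (n = m) := by omega
      have h2 : ¬ (n ∈ Finset.Icc (m+2) (n-1)) := by simp [Finset.mem_Icc]; omega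
      simp [h1, h2]
    · have hEu : E' u (m+1) = E u (m+1) := hE' u (m+1) hun
      have hDu : outDeg n E' u = outDeg n E u := outDeg_congr (fun v => hE' u v hun)
      rw [hEu, hDu]
      by_cases hu1 : u = 1
      · subst hu1
        rw [outDeg_one hDig hpath hdist (by omega)]
        by_cases hm1' : m = 1
        · subst hm1'
          have : E 1 2 = true := (edge_one hDig hpath hdist (by omega) 2).mpr rfl
          have h2 : ¬ ((1:ℕ) ∈ Finset.Icc 3 (n-1)) := by simp
          simp [this, h2, hun]
        · have : E 1 (m+1) = false := by
            rw [← Bool.not_eq_true]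
            rw [edge_one hDig hpath hdist (by omega) (m+1)]
            omega
          have h1 : ¬ ((1:ℕ) = m) := by omega
          have h2 : ¬ ((1:ℕ) ∈ Finset.Icc (m+2) (n-1)) := by simp [Finset.mem_Icc]
          simp [this, h1, h2, hun]
      · have hu2 : 2 ≤ u := by omega
        have hun' : u ≤ n - 1 := by omega
        have hnb := nbrs hDig hpath hdist (hdeg u hu2 hun') hu2 hun' (m+1)
        rw [hdeg u hu2 hun']
        by_cases hum : u = m
        · subst hum
          have : E u (u+1) = true := hnb.mpr ⟨by omega, by omega, by omega⟩
          have h2 : ¬ (u ∈ Finset.Icc (u+2) (n-1)) := by simp only [Finset.mem_Icc]; omega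
          simp [this, h2, hun]
        · by_cases humid : m + 2 ≤ u ∧ u ≤ n - 1
          · have : E u (m+1) = true := hnb.mpr ⟨by omega, by omega, by omega⟩
            have h2 : u ∈ Finset.Icc (m+2) (n-1) := by simp [Finset.mem_Icc]; omega
            simp [this, h2, hum, hun]
          · have : E u (m+1) = false := by
              rw [← Bool.not_eq_true, hnb]
              omega
            have h2 : ¬ (u ∈ Finset.Icc (m+2) (n-1)) := by simp [Finset.mem_Icc]; omega
            simp [this, h2, hum, hun]
  rw [Finset.sum_congr rfl hterm]
  rw [Finset.sum_add_distrib, Finset.sum_add_distrib]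
  rw [Finset.sum_ite_eq' (Finset.Icc 1 n) m (fun _ => φ m / (m:ℝ))]
  rw [Finset.sum_ite_eq' (Finset.Icc 1 n) n
    (fun _ => if E' n (m+1) then φ n / (outDeg n E' n : ℝ) else 0)]
  rw [Finset.sum_ite_mem]
  have hmem : m ∈ Finset.Icc 1 n := by simp [Finset.mem_Icc]; omega
  have hmemn : n ∈ Finset.Icc 1 n := by simp [Finset.mem_Icc]; omega
  have hinter : Finset.Icc 1 n ∩ Finset.Icc (m+2) (n-1) = Finset.Icc (m+2) (n-1) := by
    apply Finset.inter_eq_right.mpr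
    apply Finset.Icc_subset_Icc <;> omega
  rw [hinter, if_pos hmem, if_pos hmemn]
  ring

lemma eqn_top (hDig : IsDigraph n E)
    (hpath : ∀ i, 1 ≤ i → i < n → E i (i+1) = true)
    (hdist : dist E 1 n = n - 1)
    (hdeg : ∀ i, 2 ≤ i → i ≤ n - 1 → outDeg n E i = i)
    (hn : 4 ≤ n)
    (E' : ℕ → ℕ → Bool) (hE' : ∀ u v, u ≠ n → E' u v = E u v)
    (hE'n : ∀ v, E' n v = true → E n v = true)
    (φ : ℕ → ℝ) (hP : IsPerron n E' φ) :
    φ n = φ (n-1) / ((n:ℝ) - 1) := by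
  have hst := hP.2.2 n (by simp [Finset.mem_Icc]; omega)
  rw [hst]
  have hterm : ∀ u ∈ Finset.Icc 1 n,
      (if E' u n then φ u / (outDeg n E' u : ℝ) else 0) =
      (if u = n - 1 then φ (n-1) / ((n:ℝ) - 1) else 0) := by
    intro u huI
    simp only [Finset.mem_Icc] at huI
    by_cases hun : u = n
    · rw [hun]
      have hloop : E' n n = false := by
        rw [← Bool.not_eq_true]
        intro h
        exact (hDig n n (hE'n n h)).2.2 rfl
      have h1 : ¬ (n = n - 1) := by omega
      simp [hloop, h1]
    · have hEu : E' u n = E u n := hE' u n hun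
      have hDu : outDeg n E' u = outDeg n E u := outDeg_congr (fun v => hE' u v hun)
      rw [hEu, hDu]
      by_cases hu1 : u = 1
      · subst hu1
        have : E 1 n = false := by
          rw [← Bool.not_eq_true, edge_one hDig hpath hdist (by omega) n]
          omega
        have h1 : ¬ ((1:ℕ) = n - 1) := by omega
        simp [this, h1]
      · have hu2 : 2 ≤ u := by omega
        have hun' : u ≤ n - 1 := by omega
        have hnb := nbrs hDig hpath hdist (hdeg u hu2 hun') hu2 hun' n
        by_cases hu : u = n - 1
        · have hEt : E u n = true := hnb.mpr ⟨by omega, by omega, by omega⟩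
          rw [if_pos hEt, if_pos hu, hdeg u hu2 hun', hu]
          rw [Nat.cast_sub (by omega : 1 ≤ n), Nat.cast_one]
        · have : E u n = false := by
            rw [← Bool.not_eq_true, hnb]
            omega
          simp [this, hu]
  rw [Finset.sum_congr rfl hterm]
  rw [Finset.sum_ite_eq' (Finset.Icc 1 n) (n-1) (fun _ => φ (n-1) / ((n:ℝ) - 1))]
  rw [if_pos (by simp [Finset.mem_Icc]; omega)]

end Eqn

set_option maxHeartbeats 1000000 in
/-- Proposition 11 (a),(b),(c): comparison of the normalized Perron vectors of
`D ∈ 𝒟′_n` and `D⁻ = D - (v_n,v_t)`. -/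
theorem stmt11 (n t : ℕ) (E : ℕ → ℕ → Bool) (φ ψ : ℕ → ℝ)
    (hD : memDn' n E φ)
    (ht3 : 3 ≤ t) (htn : t ≤ n - 1) (hedge : E n t = true)
    (htmax : ∀ t', t < t' → t' ≤ n - 1 → E n t' = false)
    (hψ : IsPerron n (fun u v => E u v && !(u == n && v == t)) ψ) :
    -- (a)
    (∀ i, t ≤ i → i ≤ n → ψ i / ψ n = φ i / φ n) ∧
    -- (b)
    (ψ (t-1) / ψ n - φ (t-1) / φ n) / ((t : ℝ) - 1) = 1 / (outDeg n E n : ℝ) ∧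
    -- (c)
    (0 < (1 / (outDeg n E n : ℝ)) *
        (1 - 1 / (((t : ℝ) - 1) * ((outDeg n E n : ℝ) - 1))) ∧
      (1 / (outDeg n E n : ℝ)) *
        (1 - 1 / (((t : ℝ) - 1) * ((outDeg n E n : ℝ) - 1))) ≤
        (ψ (t-2) / ψ n - φ (t-2) / φ n) / (((t : ℝ) - 1) * ((t : ℝ) - 2)) ∧
      (ψ (t-2) / ψ n - φ (t-2) / φ n) / (((t : ℝ) - 1) * ((t : ℝ) - 2)) ≤
        1 / (outDeg n E n : ℝ)) := by
  obtain ⟨hDig, hSC, hPer, hpath, hdist1, hdeg, hmax2, hminn, hsd, hd2n, hd2, hv⟩ := hD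
  have hn4 : 4 ≤ n := by omega
  set E' : ℕ → ℕ → Bool := fun u v => E u v && !(u == n && v == t) with hE'def
  set d : ℕ := outDeg n E n with hddef
  -- basic facts about E'
  have hE'ne : ∀ u v, u ≠ n → E' u v = E u v := by
    intro u v h
    simp [hE'def, h]
  have hE'nv : ∀ v, E' n v = (E n v && !(v == t)) := by
    intro v
    simp [hE'def]
  have hE'n : ∀ v, E' n v = true → E n v = true := by
    intro v h
    rw [hE'nv] at h
    exact (Bool.and_eq_true _ _ |>.mp h).1
  -- out-degree of n in E'
  have hdout : outDeg n E' n = d - 1 := by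
    unfold outDeg
    have hset : (Finset.Icc 1 n).filter (fun v => E' n v) =
        ((Finset.Icc 1 n).filter (fun v => E n v)).erase t := by
      ext v
      simp only [Finset.mem_erase, Finset.mem_filter, hE'nv, Bool.and_eq_true,
        Bool.not_eq_true', beq_eq_false_iff_ne, ne_eq]
      tauto
    rw [hset, Finset.card_erase_of_mem]
    · rfl
    · rw [Finset.mem_filter]
      exact ⟨by simp [Finset.mem_Icc]; omega, hedge⟩
  have hdR : ((outDeg n E' n : ℕ) : ℝ) = (d:ℝ) - 1 := by
    rw [hdout, Nat.cast_sub (by omega : 1 ≤ d), Nat.cast_one]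
  -- positivity
  have hφn : 0 < φ n := hPer.1 n (by simp [Finset.mem_Icc]; omega)
  have hψn : 0 < ψ n := hψ.1 n (by simp [Finset.mem_Icc]; omega)
  have hdpos : (0:ℝ) < d := by
    have : (2:ℝ) ≤ d := by exact_mod_cast hd2
    linarith
  have ht1pos : (0:ℝ) < (t:ℝ) - 1 := by
    have : (3:ℝ) ≤ t := by exact_mod_cast ht3
    linarith
  -- equations
  have eqφ := fun m hm1 hm => eqn_mid hDig hpath hdist1 hdeg hn4 E (fun _ _ _ => rfl) φ hPer m hm1 hm
  have eqψ := fun m hm1 hm => eqn_mid hDig hpath hdist1 hdeg hn4 E' hE'ne ψ hψ m hm1 hm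
  have eqφn := eqn_top hDig hpath hdist1 hdeg hn4 E (fun _ _ _ => rfl) (fun _ h => h) φ hPer
  have eqψn := eqn_top hDig hpath hdist1 hdeg hn4 E' hE'ne hE'n ψ hψ
  have hn1ne : ((n:ℝ) - 1) ≠ 0 := by
    have : (4:ℝ) ≤ n := by exact_mod_cast hn4
    linarith
  have hφn1 : φ (n-1) = ((n:ℝ) - 1) * φ n := by
    rw [eqφn]; field_simp
  have hψn1 : ψ (n-1) = ((n:ℝ) - 1) * ψ n := by
    rw [eqψn]; field_simp
  -- key recurrence for the difference
  have hkey : ∀ m, 1 ≤ m → m + 1 ≤ n - 1 →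
      ψ m * φ n - φ m * ψ n = (m:ℝ) * ((ψ (m+1) * φ n - φ (m+1) * ψ n)
        - (∑ u ∈ Finset.Icc (m+2) (n-1), (ψ u * φ n - φ u * ψ n) / u)
        - ((if E' n (m+1) = true then ψ n / ((d:ℝ) - 1) else 0) * φ n
           - (if E n (m+1) = true then φ n / (d:ℝ) else 0) * ψ n)) := by
    intro m hm1 hm
    have e1 := eqφ m hm1 hm
    have e2 := eqψ m hm1 hm
    rw [hdR] at e2
    have hmne : ((m:ℝ)) ≠ 0 := by
      have : (1:ℝ) ≤ m := by exact_mod_cast hm1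
      linarith
    have hsum : ∑ u ∈ Finset.Icc (m+2) (n-1), (ψ u * φ n - φ u * ψ n) / (u:ℝ)
        = (∑ u ∈ Finset.Icc (m+2) (n-1), ψ u / u) * φ n
          - (∑ u ∈ Finset.Icc (m+2) (n-1), φ u / u) * ψ n := by
      rw [Finset.sum_mul, Finset.sum_mul, ← Finset.sum_sub_distrib]
      exact Finset.sum_congr rfl fun u _ => by ring
    rw [← hddef] at e1
    rw [hsum, e1, e2]
    generalize (if E' n (m+1) = true then ψ n / ((d:ℝ) - 1) else 0) = X
    generalize (if E n (m+1) = true then φ n / (d:ℝ) else 0) = Y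
    field_simp
    ring
  -- vanishing of the difference above t
  have hzero : ∀ j, ∀ m, t ≤ m → m ≤ n → n - m ≤ j → ψ m * φ n - φ m * ψ n = 0 := by
    intro j
    induction j with
    | zero =>
      intro m h1 h2 h3
      have : m = n := by omega
      rw [this]; ring
    | succ j ih =>
      intro m h1 h2 h3
      by_cases hmn : m = n
      · rw [hmn]; ring
      · by_cases hmn1 : m = n - 1
        · rw [hmn1, hφn1, hψn1]; ring
        · have hm2 : m + 1 ≤ n - 1 := by omega
          rw [hkey m (by omega) hm2]
          have z1 : ψ (m+1) * φ n - φ (m+1) * ψ n = 0 :=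
            ih (m+1) (by omega) (by omega) (by omega)
          have z2 : ∑ u ∈ Finset.Icc (m+2) (n-1), (ψ u * φ n - φ u * ψ n) / (u:ℝ) = 0 := by
            apply Finset.sum_eq_zero
            intro u hu
            rw [Finset.mem_Icc] at hu
            rw [ih u (by omega) (by omega) (by omega)]
            simp
          have hEf : E n (m+1) = false := htmax (m+1) (by omega) (by omega)
          have hE'f : E' n (m+1) = false := by
            rw [hE'nv, hEf]
            rfl
          rw [z1, z2, hEf, hE'f]
          simp
  -- part (a)
  have ha : ∀ i, t ≤ i → i ≤ n → ψ i / ψ n = φ i / φ n := by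
    intro i h1 h2
    rw [div_eq_div_iff hψn.ne' hφn.ne']
    have := hzero n i h1 h2 (by omega)
    linarith
  -- part (b) computation
  have ht11 : t - 1 + 1 = t := by omega
  have ht12 : t - 1 + 2 = t + 1 := by omega
  have hbkey := hkey (t-1) (by omega) (by omega)
  rw [ht11, ht12] at hbkey
  have zt : ψ t * φ n - φ t * ψ n = 0 := hzero n t le_rfl (by omega) (by omega)
  have zsum1 : ∑ u ∈ Finset.Icc (t+1) (n-1), (ψ u * φ n - φ u * ψ n) / (u:ℝ) = 0 := by
    apply Finset.sum_eq_zero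
    intro u hu
    rw [Finset.mem_Icc] at hu
    rw [hzero n u (by omega) (by omega) (by omega)]
    simp
  have hE't : E' n t = false := by
    rw [hE'nv]
    simp
  rw [zt, zsum1, hedge, hE't] at hbkey
  simp only [if_pos, if_neg, Bool.false_eq_true, if_false, if_true] at hbkey
  have hct1 : ((t - 1 : ℕ) : ℝ) = (t:ℝ) - 1 := by
    rw [Nat.cast_sub (by omega : 1 ≤ t), Nat.cast_one]
  rw [hct1] at hbkey
  have hbkey' : ψ (t-1) * φ n - φ (t-1) * ψ n = (((t:ℝ) - 1) * φ n * ψ n) * (1 / (d:ℝ)) := by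
    rw [hbkey]; ring
  have hb : (ψ (t-1) / ψ n - φ (t-1) / φ n) / ((t : ℝ) - 1) = 1 / (d : ℝ) := by
    rw [div_sub_div _ _ hψn.ne' hφn.ne', mul_comm (ψ n) (φ (t-1)), hbkey']
    generalize (1 / (d:ℝ)) = W
    field_simp
  refine ⟨ha, hb, ?_⟩
  -- part (c)
  have ht21 : t - 2 + 1 = t - 1 := by omega
  have ht22 : t - 2 + 2 = t := by omega
  have hckey := hkey (t-2) (by omega) (by omega)
  rw [ht21, ht22] at hckey
  have zsum2 : ∑ u ∈ Finset.Icc t (n-1), (ψ u * φ n - φ u * ψ n) / (u:ℝ) = 0 := by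
    apply Finset.sum_eq_zero
    intro u hu
    rw [Finset.mem_Icc] at hu
    rw [hzero n u (by omega) (by omega) (by omega)]
    simp
  have hE't1 : E' n (t-1) = E n (t-1) := by
    rw [hE'nv]
    have hne : (t - 1 == t) = false := by
      simp only [beq_eq_false_iff_ne, ne_eq]
      omega
    rw [hne]
    simp
  rw [zsum2, hbkey', hE't1] at hckey
  have hct2 : ((t - 2 : ℕ) : ℝ) = (t:ℝ) - 2 := by
    rw [Nat.cast_sub (by omega : 2 ≤ t)]
    norm_num
  rw [hct2] at hckey
  have ht2pos : (0:ℝ) < (t:ℝ) - 2 := by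
    have : (3:ℝ) ≤ t := by exact_mod_cast ht3
    linarith
  have hd1pos : (0:ℝ) < (d:ℝ) - 1 := by
    have : (2:ℝ) ≤ d := by exact_mod_cast hd2
    linarith
  have hprodpos : (0:ℝ) < ((t:ℝ) - 1) * ((d:ℝ) - 1) := by positivity
  have hfrac : 1 / (((t:ℝ) - 1) * ((d:ℝ) - 1)) < 1 := by
    rw [div_lt_one hprodpos]
    have h1 : (2:ℝ) ≤ (t:ℝ) - 1 := by
      have : (3:ℝ) ≤ t := by exact_mod_cast ht3
      linarith
    have h2 : (1:ℝ) ≤ (d:ℝ) - 1 := by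
      have : (2:ℝ) ≤ d := by exact_mod_cast hd2
      linarith
    nlinarith
  have hLpos : 0 < (1 / (d : ℝ)) * (1 - 1 / (((t : ℝ) - 1) * ((d : ℝ) - 1))) := by
    have h0 : 0 < 1 - 1 / (((t:ℝ) - 1) * ((d:ℝ) - 1)) := by linarith
    positivity
  have hXval : (ψ (t-2) / ψ n - φ (t-2) / φ n) / (((t : ℝ) - 1) * ((t : ℝ) - 2))
      = if E n (t-1) = true
        then (1 / (d : ℝ)) * (1 - 1 / (((t : ℝ) - 1) * ((d : ℝ) - 1)))
        else 1 / (d : ℝ) := by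
    rw [div_sub_div _ _ hψn.ne' hφn.ne', mul_comm (ψ n) (φ (t-2))]
    by_cases he : E n (t-1) = true
    · rw [if_pos he, if_pos he] at hckey
      rw [if_pos he]
      have hc : ψ (t-2) * φ n - φ (t-2) * ψ n
          = (((t:ℝ) - 1) * ((t:ℝ) - 2) * φ n * ψ n) *
            ((1 / (d : ℝ)) * (1 - 1 / (((t : ℝ) - 1) * ((d : ℝ) - 1)))) := by
        rw [hckey]
        field_simp
        ring
      rw [hc]
      generalize ((1 / (d : ℝ)) * (1 - 1 / (((t : ℝ) - 1) * ((d : ℝ) - 1)))) = W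
      field_simp
    · rw [if_neg he, if_neg he] at hckey
      rw [if_neg he]
      have hc : ψ (t-2) * φ n - φ (t-2) * ψ n
          = (((t:ℝ) - 1) * ((t:ℝ) - 2) * φ n * ψ n) * (1 / (d : ℝ)) := by
        rw [hckey]
        field_simp
        ring
      rw [hc]
      generalize (1 / (d : ℝ)) = W
      field_simp
  refine ⟨hLpos, ?_, ?_⟩
  · rw [hXval]
    by_cases he : E n (t-1) = true
    · rw [if_pos he]
    · rw [if_neg he]
      have h3 : 0 ≤ (1 / (d:ℝ)) * (1 / (((t:ℝ) - 1) * ((d:ℝ) - 1))) := by positivity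
      nlinarith [h3]
  · rw [hXval]
    by_cases he : E n (t-1) = true
    · rw [if_pos he]
      have h3 : 0 ≤ (1 / (d:ℝ)) * (1 / (((t:ℝ) - 1) * ((d:ℝ) - 1))) := by positivity
      nlinarith [h3]
    · rw [if_neg he]

end PR
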